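/- Let H be a d-degenerate graph with n vertices and chromatic number at most q. Let G be a graph with pairwise disjoint vertex subsets Y_1,...,Y_q, all of equal size at least 4n, such that each vertex in Y_i is adjacent to all but at most |Y_i|/(2d) of the vertices of the union of the Y_j with j ≠ i. Then H is a subgraph of G. -/
import Mathlib

/-- A graph is `d`-degenerate if every nonempty (induced) subgraph has a vertex of degree
at most `d`. -/
def DDegenerate {V : Type*} (G : SimpleGraph V) (d : ℕ) : Prop :=
  ∀ s : Finset V, s.Nonempty → ∃ v ∈ s, {u : V | u ∈ s ∧ G.Adj v u}.ncard ≤ d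


/-- Let `H` be a `d`-degenerate graph with `n` vertices and chromatic number at most `q`. Let `G`
be a graph with pairwise disjoint vertex subsets `Y_1,…,Y_q`, all of equal size at least `4n`,
such that each vertex in `Y_i` is adjacent to all but at most `|Y_i|/(2d)` of the vertices of
`⋃_{j ≠ i} Y_j`. Then `H` is a subgraph of `G`. -/
theorem stmt_8 {W V : Type*} [Fintype W] [Fintype V]
    (H : SimpleGraph W) (G : SimpleGraph V) (d q n m : ℕ)
    (hn : Fintype.card W = n) (hH : DDegenerate H d) (hchr : H.chromaticNumber ≤ (q : ℕ∞))
    (Y : Fin q → Finset V) (hdisj : Pairwise (Function.onFun Disjoint Y))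
    (hsize : ∀ i, (Y i).card = m) (hm : 4 * n ≤ m)
    (hadj : ∀ i, ∀ v ∈ Y i,
      2 * d * {u : V | (∃ j, j ≠ i ∧ u ∈ Y j) ∧ ¬ G.Adj v u}.ncard ≤ m) :
    ∃ f : W ↪ V, ∀ a b : W, H.Adj a b → G.Adj (f a) (f b) := by
  classical
  have hcol : H.Colorable q := SimpleGraph.chromaticNumber_le_iff_colorable.mp hchr
  obtain ⟨C⟩ := hcol
  by_cases hW : IsEmpty W
  · exact ⟨⟨fun a => (hW.elim a), fun a => (hW.elim a)⟩, fun a => (hW.elim a)⟩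
  rw [not_isEmpty_iff] at hW
  have hn1 : 1 ≤ n := by rw [← hn]; exact Fintype.card_pos
  have hq : 0 < q := (C hW.some).pos
  have hV : Nonempty V := by
    have hne : (Y ⟨0, hq⟩).Nonempty := by
      rw [← Finset.card_pos, hsize]; omega
    exact ⟨hne.choose⟩
  have main : ∀ s : Finset W, ∃ f : W → V, Set.InjOn f ↑s ∧
      (∀ a ∈ s, f a ∈ Y (C a)) ∧
      (∀ a ∈ s, ∀ b ∈ s, H.Adj a b → G.Adj (f a) (f b)) := by
    intro s
    induction s using Finset.strongInduction with
    | _ s ih =>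
    rcases s.eq_empty_or_nonempty with rfl | hs
    · exact ⟨fun _ => hV.some, by simp, by simp, by simp⟩
    obtain ⟨v, hvs, hdeg⟩ := hH s hs
    obtain ⟨f, hinj, hmem, hadjf⟩ := ih (s.erase v) (Finset.erase_ssubset hvs)
    set N : Finset W := (s.erase v).filter (fun u => H.Adj v u) with hN
    have hNd : N.card ≤ d := by
      refine le_trans (Finset.card_le_card (t := {u : W | u ∈ s ∧ H.Adj v u}.toFinset) ?_) ?_
      · intro u hu
        simp only [hN, Finset.mem_filter, Finset.mem_erase] at hu
        simp only [Set.mem_toFinset, Set.mem_setOf_eq]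
        exact ⟨hu.1.2, hu.2⟩
      · rw [← Set.ncard_eq_toFinset_card']; exact hdeg
    set T : Finset V := (Y (C v)).filter
      (fun w => w ∉ (s.erase v).image f ∧ ∀ u ∈ N, G.Adj (f u) w) with hT
    have hTne : T.Nonempty := by
      by_contra hTe
      rw [Finset.not_nonempty_iff_eq_empty] at hTe
      have hsub : Y (C v) ⊆ (s.erase v).image f ∪
          N.biUnion (fun u => (Y (C v)).filter (fun x => ¬ G.Adj (f u) x)) := by
        intro x hx
        by_cases hx1 : x ∈ (s.erase v).image f
        · exact Finset.mem_union_left _ hx1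
        · by_cases hx2 : ∀ u ∈ N, G.Adj (f u) x
          · exfalso
            have : x ∈ T := by
              rw [hT, Finset.mem_filter]; exact ⟨hx, hx1, hx2⟩
            rw [hTe] at this; exact absurd this (Finset.notMem_empty x)
          · push_neg at hx2
            obtain ⟨u, hu, hux⟩ := hx2
            exact Finset.mem_union_right _ (Finset.mem_biUnion.mpr
              ⟨u, hu, Finset.mem_filter.mpr ⟨hx, hux⟩⟩)
      have hcard : m ≤ (s.erase v).card +
          ∑ u ∈ N, ((Y (C v)).filter (fun x => ¬ G.Adj (f u) x)).card := by
        calc m = (Y (C v)).card := (hsize _).symm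
        _ ≤ _ := Finset.card_le_card hsub
        _ ≤ _ := Finset.card_union_le _ _
        _ ≤ _ := by
            gcongr
            · exact Finset.card_image_le
            · exact Finset.card_biUnion_le
      have hbad : ∀ u ∈ N, 2 * d * ((Y (C v)).filter (fun x => ¬ G.Adj (f u) x)).card ≤ m := by
        intro u hu
        simp only [hN, Finset.mem_filter, Finset.mem_erase] at hu
        have hfu : f u ∈ Y (C u) := hmem u (Finset.mem_erase.mpr ⟨hu.1.1, hu.1.2⟩)
        have hkey := hadj (C u) (f u) hfu
        have hss : ((Y (C v)).filter (fun x => ¬ G.Adj (f u) x)).card ≤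
            {x : V | (∃ j, j ≠ C u ∧ x ∈ Y j) ∧ ¬ G.Adj (f u) x}.ncard := by
          rw [Set.ncard_eq_toFinset_card']
          apply Finset.card_le_card
          intro x hx
          rw [Finset.mem_filter] at hx
          simp only [Set.mem_toFinset, Set.mem_setOf_eq]
          exact ⟨⟨C v, C.valid hu.2, hx.1⟩, hx.2⟩
        calc 2 * d * ((Y (C v)).filter (fun x => ¬ G.Adj (f u) x)).card
            ≤ 2 * d * {x : V | (∃ j, j ≠ C u ∧ x ∈ Y j) ∧ ¬ G.Adj (f u) x}.ncard := by gcongr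
          _ ≤ m := hkey
      -- sum bound
      have hsum : 2 * ∑ u ∈ N, ((Y (C v)).filter (fun x => ¬ G.Adj (f u) x)).card ≤ m := by
        rcases Nat.eq_zero_or_pos d with hd | hd
        · have : N = ∅ := Finset.card_eq_zero.mp (Nat.le_zero.mp (hd ▸ hNd))
          rw [this]; simp
        · have h1 : 2 * d * ∑ u ∈ N, ((Y (C v)).filter (fun x => ¬ G.Adj (f u) x)).card
              ≤ d * m :=
            calc 2 * d * ∑ u ∈ N, ((Y (C v)).filter (fun x => ¬ G.Adj (f u) x)).card
                = ∑ u ∈ N, 2 * d * ((Y (C v)).filter (fun x => ¬ G.Adj (f u) x)).card :=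
                  Finset.mul_sum _ _ _
              _ ≤ ∑ _u ∈ N, m := Finset.sum_le_sum hbad
              _ = N.card * m := by rw [Finset.sum_const, smul_eq_mul]
              _ ≤ d * m := by gcongr
          have h2 : d * (2 * ∑ u ∈ N, ((Y (C v)).filter (fun x => ¬ G.Adj (f u) x)).card)
              ≤ d * m := by
            rw [show d * (2 * ∑ u ∈ N, ((Y (C v)).filter (fun x => ¬ G.Adj (f u) x)).card)
                = 2 * d * ∑ u ∈ N, ((Y (C v)).filter (fun x => ¬ G.Adj (f u) x)).card by ring]
            exact h1
          exact Nat.le_of_mul_le_mul_left h2 hd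
      have herase : (s.erase v).card < n := by
        calc (s.erase v).card < s.card := Finset.card_erase_lt_of_mem hvs
          _ ≤ Fintype.card W := s.card_le_univ
          _ = n := hn
      omega
    obtain ⟨w, hwT⟩ := hTne
    rw [hT, Finset.mem_filter] at hwT
    obtain ⟨hwY, hwim, hwadj⟩ := hwT
    refine ⟨Function.update f v w, ?_, ?_, ?_⟩
    · intro a ha b hb hab
      simp only [Finset.mem_coe] at ha hb
      by_cases hav : a = v <;> by_cases hbv : b = v
      · rw [hav, hbv]
      · exfalso
        rw [hav, Function.update_self] at hab
        rw [Function.update_of_ne hbv] at hab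
        exact hwim (Finset.mem_image.mpr ⟨b, Finset.mem_erase.mpr ⟨hbv, hb⟩, hab.symm⟩)
      · exfalso
        rw [hbv, Function.update_self] at hab
        rw [Function.update_of_ne hav] at hab
        exact hwim (Finset.mem_image.mpr ⟨a, Finset.mem_erase.mpr ⟨hav, ha⟩, hab⟩)
      · rw [Function.update_of_ne hav, Function.update_of_ne hbv] at hab
        exact hinj (by simp [Finset.mem_erase, hav, ha])
          (by simp [Finset.mem_erase, hbv, hb]) hab
    · intro a ha
      by_cases hav : a = v
      · rw [hav, Function.update_self]; exact hwY
      · rw [Function.update_of_ne hav]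
        exact hmem a (Finset.mem_erase.mpr ⟨hav, ha⟩)
    · intro a ha b hb hab
      by_cases hav : a = v <;> by_cases hbv : b = v
      · exfalso; rw [hav, hbv] at hab; exact H.irrefl hab
      · rw [hav] at hab
        have hbN : b ∈ N := by
          rw [hN, Finset.mem_filter, Finset.mem_erase]; exact ⟨⟨hbv, hb⟩, hab⟩
        rw [hav, Function.update_self, Function.update_of_ne hbv]
        exact (hwadj b hbN).symm
      · rw [hbv] at hab
        have haN : a ∈ N := by
          rw [hN, Finset.mem_filter, Finset.mem_erase]
          exact ⟨⟨hav, ha⟩, hab.symm⟩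
        rw [hbv, Function.update_self, Function.update_of_ne hav]
        exact hwadj a haN
      · rw [Function.update_of_ne hav, Function.update_of_ne hbv]
        exact hadjf a (Finset.mem_erase.mpr ⟨hav, ha⟩) b (Finset.mem_erase.mpr ⟨hbv, hb⟩) hab
  obtain ⟨f, hinj, _, hadjf⟩ := main Finset.univ
  have hinj' : Function.Injective f := fun a b h =>
    hinj (by simp) (by simp) h
  exact ⟨⟨f, hinj'⟩, fun a b hab =>
    hadjf a (Finset.mem_univ a) b (Finset.mem_univ b) hab⟩
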